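/- Let Π_μ denote the set of laws of càdlàg solutions of the martingale problem for A with initial distribution μ, assumed nonempty and compact for each μ, with ∪_{μ∈K} Π_μ compact for compact K ⊆ P(E). If μ_n → μ weakly in P(E), then limsup_n π₊(μ_n) ≤ π₊(μ), where π₊(ν) = sup_{P ∈ Π_ν} E^P[∫₀^∞ e^{-λt} h(X(t)) dt] for fixed h ∈ C_b(E) and λ > 0. -/

import Mathlib

open MeasureTheory Filter

/-- upper semicontinuity of `μ ↦ π₊(μ)` (the supremum over the compact set
`Π_μ` of laws of solutions with initial distribution `μ` of the resolvent functional
`Φ(ω) = ∫₀^∞ e^{-λt} h(X(t,ω)) dt` on the path space `Ω = D_E[0,∞)`). -/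
theorem stmt12 {E Ω : Type*} [MetricSpace E] [MeasurableSpace E] [BorelSpace E]
    [MetricSpace Ω] [MeasurableSpace Ω] [BorelSpace Ω]
    (X : ℝ → Ω → E)  -- the canonical process on the path space Ω = D_E[0,∞)
    (lam : ℝ) (hlam : 0 < lam)
    (h : E → ℝ) (hh : Continuous h) (hhb : ∃ C, ∀ x, |h x| ≤ C)
    (Φ : Ω → ℝ) (hΦ : ∀ ω, Φ ω = ∫ t in Set.Ioi (0:ℝ), Real.exp (-(lam * t)) * h (X t ω))
    (hΦc : Continuous Φ) (hΦb : ∃ C, ∀ ω, |Φ ω| ≤ C)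
    (Pi : ProbabilityMeasure E → Set (ProbabilityMeasure Ω))
    (hne : ∀ μ, (Pi μ).Nonempty)
    (hinit : ∀ μ, ∀ P ∈ Pi μ, (P : Measure Ω).map (X 0) = (μ : Measure E))
    (hcomp : ∀ K : Set (ProbabilityMeasure E), IsCompact K → IsCompact (⋃ μ ∈ K, Pi μ))
    (μn : ℕ → ProbabilityMeasure E) (μ : ProbabilityMeasure E)
    (hconv : Tendsto μn atTop (nhds μ)) :
    limsup (fun n => ⨆ P ∈ Pi (μn n), ∫ ω, Φ ω ∂(P : Measure Ω)) atTop
      ≤ ⨆ P ∈ Pi μ, ∫ ω, Φ ω ∂(P : Measure Ω) := by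
  clear hΦ hlam hh hhb lam h
  obtain ⟨C, hC⟩ := hΦb
  set g : ProbabilityMeasure Ω → ℝ := fun P => ∫ ω, Φ ω ∂(P : Measure Ω) with hgdef
  -- `Φ` as a bounded continuous function
  set fΦ : BoundedContinuousFunction Ω ℝ :=
    BoundedContinuousFunction.ofNormedAddCommGroup Φ hΦc C (fun ω => by simpa using hC ω)
    with hfΦ
  have hgc : Continuous g := by
    have := ProbabilityMeasure.continuous_integral_boundedContinuousFunction (X := Ω) fΦ
    simpa [hfΦ, hgdef] using this
  -- bound on `g`
  have hgb : ∀ P : ProbabilityMeasure Ω, |g P| ≤ C := by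
    intro P
    have : ‖∫ ω, Φ ω ∂(P : Measure Ω)‖ ≤ C * ((P : Measure Ω) Set.univ).toReal :=
      norm_integral_le_of_norm_le_const (ae_of_all _ fun ω => by simpa using hC ω)
    simpa [hgdef] using this
  have hC0 : 0 ≤ C := le_trans (abs_nonneg _) (hgb (hne μ).choose)
  haveI : Nonempty (ProbabilityMeasure Ω) := ⟨(hne μ).choose⟩
  -- boundedness of the inner suprema
  have hbdd : ∀ ν : ProbabilityMeasure E,
      BddAbove (Set.range fun P : ProbabilityMeasure Ω => ⨆ (_ : P ∈ Pi ν), g P) := by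
    intro ν
    refine ⟨C, ?_⟩
    rintro x ⟨P, rfl⟩
    by_cases hP : P ∈ Pi ν
    · simp only [ciSup_pos hP]
      exact (abs_le.mp (hgb P)).2
    · simp [hP, Real.iSup_of_isEmpty, hC0]
  -- each element of `Pi ν` has integral at most the sup
  have hle_sup : ∀ ν : ProbabilityMeasure E, ∀ P ∈ Pi ν, g P ≤ ⨆ P ∈ Pi ν, g P := by
    intro ν P hP
    have h1 : (⨆ (_ : P ∈ Pi ν), g P) = g P := ciSup_pos (f := fun _ => g P) hP
    have h2 : (⨆ (_ : P ∈ Pi ν), g P) ≤ ⨆ P ∈ Pi ν, g P := le_ciSup (hbdd ν) P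
    rw [h1] at h2
    exact h2
  set f : ℕ → ℝ := fun n => ⨆ P ∈ Pi (μn n), g P with hfdef
  set S : ℝ := ⨆ P ∈ Pi μ, g P with hSdef
  -- lower bound for `f`
  have hflb : ∀ n, -C ≤ f n := by
    intro n
    obtain ⟨P, hP⟩ := hne (μn n)
    have := hle_sup _ P hP
    have := abs_le.mp (hgb P)
    simp only [hfdef]
    linarith
  -- the compact sets
  have hKcomp : ∀ m : ℕ, IsCompact (insert μ (Set.range fun j => μn (j + m))) := by
    intro m
    exact (hconv.comp (tendsto_add_atTop_nat m)).isCompact_insert_range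
  set K : ℕ → Set (ProbabilityMeasure E) :=
    fun m => insert μ (Set.range fun j => μn (j + m)) with hKdef
  set U : ℕ → Set (ProbabilityMeasure Ω) := fun m => ⋃ ν ∈ K m, Pi ν with hUdef
  have hUcomp : ∀ m, IsCompact (U m) := fun m => hcomp (K m) (hKcomp m)
  -- main eventual estimate
  have hev : ∀ ε : ℝ, 0 < ε → ∀ᶠ n in atTop, f n ≤ S + ε := by
    intro ε hε
    by_contra hcon
    rw [not_eventually] at hcon
    have hfreq : ∃ᶠ n in atTop, S + ε < f n := hcon.mono fun n hn => lt_of_not_ge hn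
    -- choose near-optimal measures
    have hchoice : ∀ n, ∃ Q ∈ Pi (μn n), (S + ε < f n → S + ε < g Q) := by
      intro n
      by_cases hn : S + ε < f n
      · obtain ⟨P, hP⟩ := exists_lt_of_lt_ciSup hn
        by_cases hPmem : P ∈ Pi (μn n)
        · rw [ciSup_pos (f := fun _ => g P) hPmem] at hP
          exact ⟨P, hPmem, fun _ => hP⟩
        · exfalso
          haveI hie : IsEmpty (P ∈ Pi (μn n) : Prop) := ⟨hPmem⟩
          rw [Real.iSup_of_isEmpty] at hP
          by_cases hun : ∀ P', P' ∈ Pi μ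
          · obtain ⟨P₁, hP₁⟩ := hne (μn n)
            have e1 : (μn n : Measure E) = (μ : Measure E) := by
              rw [← hinit (μn n) P₁ hP₁, hinit μ P₁ (hun P₁)]
            have e2 : μn n = μ := ProbabilityMeasure.toMeasure_injective e1
            rw [e2] at hPmem
            exact hPmem (hun P)
          · push_neg at hun
            obtain ⟨P', hP'⟩ := hun
            haveI hie' : IsEmpty (P' ∈ Pi μ : Prop) := ⟨hP'⟩
            have h2 := le_ciSup (hbdd μ) P'
            rw [Real.iSup_of_isEmpty] at h2
            simp only [hSdef] at *
            linarith
      · obtain ⟨P, hP⟩ := hne (μn n)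
        exact ⟨P, hP, fun hc => absurd hc hn⟩
    choose Q hQmem hQlt using hchoice
    set s : Set ℕ := {n | S + ε < f n} with hsdef
    have hNB : (atTop ⊓ Filter.principal s).NeBot := frequently_iff_neBot.mp hfreq
    set F : Filter (ProbabilityMeasure Ω) := Filter.map Q (atTop ⊓ Filter.principal s)
      with hFdef
    haveI := hNB
    haveI hFNB : F.NeBot := Filter.map_neBot
    -- membership of the tails
    have hUF : ∀ m, U m ∈ F := by
      intro m
      have h1 : {n : ℕ | Q n ∈ U m} ∈ atTop ⊓ Filter.principal s := by
        apply Filter.mem_of_superset (Filter.mem_inf_of_left (Filter.Ici_mem_atTop m))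
        intro n hn
        have hmem : μn n ∈ K m := by
          refine Set.mem_insert_iff.mpr (Or.inr ⟨n - m, ?_⟩)
          simp [Nat.sub_add_cancel hn]
        exact Set.mem_biUnion hmem (hQmem n)
      exact h1
    have hFle : F ≤ Filter.principal (U 0) := Filter.le_principal_iff.mpr (hUF 0)
    obtain ⟨P, hPU0, hclP⟩ := (hUcomp 0).exists_clusterPt hFle
    -- P belongs to every U m
    have hPUm : ∀ m, P ∈ U m := by
      intro m
      have h1 : ClusterPt P (Filter.principal (U m)) :=
        hclP.mono (Filter.le_principal_iff.mpr (hUF m))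
      have h2 : P ∈ closure (U m) := mem_closure_iff_clusterPt.mpr h1
      rwa [(hUcomp m).isClosed.closure_eq] at h2
    -- g P is at least S + ε
    have hgP : S + ε ≤ g P := by
      have h1 : ClusterPt (g P) (Filter.map g F) := hclP.map hgc.continuousAt tendsto_map
      have h2 : Set.Ici (S + ε) ∈ Filter.map g F := by
        rw [hFdef, Filter.map_map]
        apply Filter.mem_of_superset (Filter.mem_inf_of_right (Filter.mem_principal_self s))
        intro n hn
        exact (hQlt n hn).le
      have h3 : ClusterPt (g P) (Filter.principal (Set.Ici (S + ε))) :=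
        h1.mono (Filter.le_principal_iff.mpr h2)
      have h4 : g P ∈ closure (Set.Ici (S + ε)) := mem_closure_iff_clusterPt.mpr h3
      rwa [isClosed_Ici.closure_eq] at h4
    -- identify the initial distribution
    have hνm : ∀ m, ∃ ν ∈ K m, P ∈ Pi ν := by
      intro m
      obtain ⟨ν, hν, hPν⟩ := Set.mem_iUnion₂.mp (hPUm m)
      exact ⟨ν, hν, hPν⟩
    obtain ⟨ν, hνK0, hPν⟩ := hνm 0
    have hνall : ∀ m, ν ∈ K m := by
      intro m
      obtain ⟨ν', hν'K, hPν'⟩ := hνm m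
      have : (ν' : Measure E) = (ν : Measure E) := by
        rw [← hinit ν' P hPν', ← hinit ν P hPν]
      rwa [ProbabilityMeasure.toMeasure_injective this] at hν'K
    -- ν must equal μ
    have hνμ : ν = μ := by
      by_contra hne'
      have hfreq2 : ∃ᶠ n in atTop, μn n = ν := by
        rw [Filter.frequently_atTop]
        intro m
        obtain ⟨j, hj⟩ := (Set.mem_insert_iff.mp (hνall m)).resolve_left hne'
        exact ⟨j + m, Nat.le_add_left m j, hj⟩
      have hNB2 : (atTop ⊓ Filter.principal {n | μn n = ν}).NeBot :=
        frequently_iff_neBot.mp hfreq2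
      have h1 : Tendsto μn (atTop ⊓ Filter.principal {n | μn n = ν}) (nhds μ) :=
        hconv.mono_left inf_le_left
      have h2 : Tendsto μn (atTop ⊓ Filter.principal {n | μn n = ν}) (nhds ν) := by
        apply Tendsto.congr' _ tendsto_const_nhds
        exact (Filter.eventually_inf_principal.mpr
          (Filter.Eventually.of_forall fun n hn => hn.symm))
      exact hne' (tendsto_nhds_unique h2 h1)
    rw [hνμ] at hPν
    have : g P ≤ S := hle_sup μ P hPν
    linarith
  -- conclude via limsup
  have hcob : IsCoboundedUnder (· ≤ ·) atTop f := by
    apply Filter.IsBoundedUnder.isCoboundedUnder_le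
    exact ⟨-C, Filter.eventually_map.mpr (Filter.Eventually.of_forall hflb)⟩
  have hmain : ∀ ε : ℝ, 0 < ε → limsup f atTop ≤ S + ε := by
    intro ε hε
    exact Filter.limsup_le_of_le hcob (hev ε hε)
  have : limsup f atTop ≤ S := by
    by_contra hlt
    push_neg at hlt
    have := hmain ((limsup f atTop - S) / 2) (by linarith)
    linarith
  exact this
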